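/- Vanishing weighted trace at the degeneracy point: if u ∈ L²(0,1) is locally absolutely continuous on (0,1] with ∫₀¹ x²|u'(x)|² dx < ∞, then lim_{x→0⁺} x·u(x)² = 0. -/

import Mathlib

open MeasureTheory Set Filter

theorem weighted_trace_vanishes_at_zero
    (u ud : ℝ → ℝ)
    (hu2 : MeasureTheory.IntegrableOn (fun x => (u x) ^ 2) (Set.Ioo 0 1))
    (huderiv : ∀ x ∈ Set.Ioc (0:ℝ) 1, HasDerivAt u (ud x) x)
    (hud2 : MeasureTheory.IntegrableOn (fun x => x ^ 2 * (ud x) ^ 2) (Set.Ioo 0 1)) :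
    Filter.Tendsto (fun x => x * (u x) ^ 2) (nhdsWithin 0 (Set.Ioi 0)) (nhds 0) := by
  set v : ℝ → ℝ := fun x => x * u x ^ 2 with hv
  set g : ℝ → ℝ := fun x => u x ^ 2 + x * (2 * u x * ud x) with hgdef
  -- measurability
  have hucont : ContinuousOn u (Ioo 0 1) := fun x hx =>
    ((huderiv x ⟨hx.1, hx.2.le⟩).continuousAt).continuousWithinAt
  have humeas : AEMeasurable u (volume.restrict (Ioo 0 1)) :=
    hucont.aemeasurable measurableSet_Ioo
  have hudmeas : AEMeasurable ud (volume.restrict (Ioo 0 1)) := by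
    refine (measurable_deriv u).aemeasurable.congr ?_
    filter_upwards [ae_restrict_mem measurableSet_Ioo] with x hx
    exact (huderiv x ⟨hx.1, hx.2.le⟩).deriv
  -- the cross term is integrable
  have hcross : IntegrableOn (fun x => x * (2 * u x * ud x)) (Ioo 0 1) := by
    have hmeas : AEStronglyMeasurable (fun x => x * (2 * u x * ud x))
        (volume.restrict (Ioo 0 1)) :=
      (aemeasurable_id.mul ((humeas.const_mul 2).mul hudmeas)).aestronglyMeasurable
    refine Integrable.mono (hu2.add hud2) hmeas ?_
    refine Eventually.of_forall (fun x => ?_)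
    have h1 : x * (2 * u x * ud x) = 2 * u x * (x * ud x) := by ring
    have h2 : |2 * u x * (x * ud x)| ≤ u x ^ 2 + x ^ 2 * ud x ^ 2 := by
      have := two_mul_le_add_sq |u x| |x * ud x|
      calc |2 * u x * (x * ud x)| ≤ 2 * |u x| * |x * ud x| := by
            rw [abs_mul, abs_mul, abs_two]
          _ ≤ |u x| ^ 2 + |x * ud x| ^ 2 := this
          _ = u x ^ 2 + x ^ 2 * ud x ^ 2 := by rw [sq_abs, sq_abs, mul_pow]
    have h3 : (0:ℝ) ≤ u x ^ 2 + x ^ 2 * ud x ^ 2 := by positivity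
    simp only [Real.norm_eq_abs, h1, Pi.add_apply]
    rw [abs_of_nonneg h3]
    exact h2
  have hgint : IntegrableOn g (Ioo 0 1) := hu2.add hcross
  have hgIcc : IntegrableOn g (Icc 0 1) :=
    (integrableOn_Icc_iff_integrableOn_Ioo).mpr hgint
  -- v has derivative g on (0,1]
  have hvderiv : ∀ x ∈ Ioc (0:ℝ) 1, HasDerivAt v (g x) x := by
    intro x hx
    have h := (hasDerivAt_id x).mul ((huderiv x hx).pow 2)
    convert h using 1
    exacts [rfl, rfl, rfl, by simp [g]]
  -- FTC on [a,1]
  have hFTC : ∀ a ∈ Ioo (0:ℝ) 1, ∫ t in a..1, g t = v 1 - v a := by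
    intro a ha
    refine intervalIntegral.integral_eq_sub_of_hasDerivAt (fun x hx => ?_) ?_
    · rw [uIcc_of_le ha.2.le] at hx
      exact hvderiv x ⟨lt_of_lt_of_le ha.1 hx.1, hx.2⟩
    · rw [intervalIntegrable_iff_integrableOn_Ioo_of_le ha.2.le]
      exact hgint.mono_set (Ioo_subset_Ioo ha.1.le le_rfl)
  set F : ℝ → ℝ := fun a => ∫ t in (0:ℝ)..a, g t with hF
  have hFcont : ContinuousOn F (Icc 0 1) := by
    have := intervalIntegral.continuousOn_primitive_interval
      (f := g) (μ := volume) (a := 0) (b := 1) (by rwa [uIcc_of_le zero_le_one])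
    rwa [uIcc_of_le zero_le_one] at this
  have hIcc_mem : Icc (0:ℝ) 1 ∈ nhdsWithin 0 (Ioi 0) := by
    refine mem_of_superset (Ioo_mem_nhdsGT_of_mem ⟨le_refl 0, zero_lt_one⟩) Ioo_subset_Icc_self
  have hFtendsto : Tendsto F (nhdsWithin 0 (Ioi 0)) (nhds 0) := by
    have h0 : F 0 = 0 := intervalIntegral.integral_same
    have := (hFcont 0 ⟨le_refl 0, zero_le_one⟩).tendsto
    rw [h0] at this
    exact this.mono_left (nhdsWithin_le_iff.mpr hIcc_mem)
  set L : ℝ := v 1 - ∫ t in (0:ℝ)..1, g t with hLdef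
  -- v a = L + F a on (0,1)
  have hveq : ∀ a ∈ Ioo (0:ℝ) 1, v a = L + F a := by
    intro a ha
    have hsub : (∫ t in (0:ℝ)..1, g t) - F a = ∫ t in a..1, g t := by
      refine intervalIntegral.integral_interval_sub_left ?_ ?_
      · rw [intervalIntegrable_iff_integrableOn_Ioo_of_le zero_le_one]
        exact hgint
      · rw [intervalIntegrable_iff_integrableOn_Ioo_of_le ha.1.le]
        exact hgint.mono_set (Ioo_subset_Ioo le_rfl ha.2.le)
    have := hFTC a ha
    rw [← hsub] at this
    simp only [hLdef]
    linarith
  have hLtend : Tendsto v (nhdsWithin 0 (Ioi 0)) (nhds L) := by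
    have h1 : Tendsto (fun a => L + F a) (nhdsWithin 0 (Ioi 0)) (nhds (L + 0)) :=
      tendsto_const_nhds.add hFtendsto
    rw [add_zero] at h1
    refine h1.congr' ?_
    filter_upwards [Ioo_mem_nhdsGT_of_mem (by constructor <;> norm_num : (0:ℝ) ∈ Ico 0 1)]
      with a ha
    exact (hveq a ha).symm
  -- L ≥ 0
  have hL0 : 0 ≤ L := by
    refine ge_of_tendsto hLtend ?_
    filter_upwards [self_mem_nhdsWithin] with x hx
    have : (0:ℝ) < x := hx
    positivity
  -- L = 0
  have hLzero : L = 0 := by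
    by_contra hne
    have hLpos : 0 < L := lt_of_le_of_ne hL0 (Ne.symm hne)
    have hev : ∀ᶠ x in nhdsWithin 0 (Ioi 0), L / 2 < v x :=
      hLtend.eventually_const_lt (half_lt_self hLpos)
    rw [eventually_iff, mem_nhdsGT_iff_exists_Ioo_subset] at hev
    obtain ⟨δ, hδmem, hδ⟩ := hev
    have hδpos : (0:ℝ) < δ := hδmem
    set ε := min δ 1 with hε
    have hεpos : 0 < ε := lt_min hδpos zero_lt_one
    -- 1/x is integrable on (0,ε), contradiction
    have hinv : IntegrableOn (fun x : ℝ => x⁻¹) (Ioo 0 ε) := by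
      refine Integrable.mono
        ((hu2.mono_set (Ioo_subset_Ioo le_rfl (min_le_right δ 1))).const_mul (2 / L))
        (measurable_inv.aestronglyMeasurable) ?_
      filter_upwards [ae_restrict_mem measurableSet_Ioo] with x hx
      have hx0 : 0 < x := hx.1
      have hxδ : x < δ := lt_of_lt_of_le hx.2 (min_le_left δ 1)
      have hvx : L / 2 < v x := hδ ⟨hx0, hxδ⟩
      have hvx' : L / 2 < x * u x ^ 2 := hvx
      have h1 : x⁻¹ ≤ 2 / L * u x ^ 2 := by
        rw [inv_le_iff_one_le_mul₀ hx0, ← sub_nonneg]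
        have heq : 2 / L * u x ^ 2 * x - 1 = (2 * (x * u x ^ 2) - L) / L := by
          field_simp
        rw [heq]
        exact div_nonneg (by linarith) hLpos.le
      have h2 : (0:ℝ) ≤ 2 / L * u x ^ 2 := by positivity
      simp only [Real.norm_eq_abs, abs_of_nonneg (le_of_lt (inv_pos.mpr hx0)),
        abs_of_nonneg h2]
      exact h1
    have hrpow : IntegrableOn (fun x : ℝ => x ^ (-1 : ℝ)) (Ioo 0 ε) := by
      refine hinv.congr_fun (fun x hx => ?_) measurableSet_Ioo
      rw [Real.rpow_neg hx.1.le, Real.rpow_one]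
    have := (intervalIntegral.integrableOn_Ioo_rpow_iff hεpos).mp hrpow
    linarith
  rw [hLzero] at hLtend
  exact hLtend
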